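/- Let n ≥ 2, positive weights p_1 ≥ ... ≥ p_n > 0 with ∑ p_i = 1, δ̄ > 0, and positive compression ratios δ_1,...,δ_n with ∑_{i=1}^n δ_i = nδ̄. Let j be an index with δ_j = min_i δ_i. Then Φ(δ_1,...,δ_n) := (∑_{i=1}^n p_i/√(δ_i))/√(δ_j) ≥ p_j/δ_j + (P - p_j^{2/3})^{3/2}/√((nδ̄ - δ_j)δ_j), where P = ∑_{i=1}^n p_i^{2/3}. -/

import Mathlib

open Finset Real

theorem stmt_6 (n : ℕ) (hn : 2 ≤ n) (p δ : Fin n → ℝ) (dbar : ℝ)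
    (hp : ∀ i, 0 < p i) (hmono : ∀ i j : Fin n, i ≤ j → p j ≤ p i)
    (hpsum : ∑ i, p i = 1) (hd : 0 < dbar)
    (hδ : ∀ i, 0 < δ i) (hδsum : ∑ i, δ i = n * dbar)
    (j : Fin n) (hmin : ∀ i, δ j ≤ δ i)
    (P : ℝ) (hP : P = ∑ i, (p i) ^ ((2:ℝ)/3)) :
    (∑ i, p i / Real.sqrt (δ i)) / Real.sqrt (δ j)
      ≥ p j / δ j +
        (P - (p j) ^ ((2:ℝ)/3)) ^ ((3:ℝ)/2) / Real.sqrt ((n * dbar - δ j) * δ j) := by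
  have hδj := hδ j
  have hsj : (0:ℝ) < Real.sqrt (δ j) := Real.sqrt_pos.mpr hδj
  set S := Finset.univ.erase j with hS
  have hSne : S.Nonempty := by
    rw [← Finset.card_pos, hS, Finset.card_erase_of_mem (Finset.mem_univ j),
      Finset.card_univ, Fintype.card_fin]
    omega
  have hBeq : ∑ i ∈ S, δ i = n * dbar - δ j := by
    rw [hS, Finset.sum_erase_eq_sub (Finset.mem_univ j), hδsum]
  have hBpos : (0:ℝ) < ∑ i ∈ S, δ i := Finset.sum_pos (fun i _ => hδ i) hSne
  have hQeq : ∑ i ∈ S, (p i) ^ ((2:ℝ)/3) = P - (p j) ^ ((2:ℝ)/3) := by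
    rw [hS, Finset.sum_erase_eq_sub (Finset.mem_univ j), hP]
  have hconj : Real.HolderConjugate ((3:ℝ)/2) 3 := ⟨by norm_num, by norm_num, by norm_num⟩
  -- Hölder
  have hf : ∀ i ∈ S, (0:ℝ) ≤ (p i / Real.sqrt (δ i)) ^ ((2:ℝ)/3) := fun i _ =>
    Real.rpow_nonneg (div_nonneg (hp i).le (Real.sqrt_nonneg _)) _
  have hg : ∀ i ∈ S, (0:ℝ) ≤ (δ i) ^ ((1:ℝ)/3) := fun i _ =>
    Real.rpow_nonneg (hδ i).le _
  have hold := Real.inner_le_Lp_mul_Lq_of_nonneg (s := S)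
    (f := fun i => (p i / Real.sqrt (δ i)) ^ ((2:ℝ)/3))
    (g := fun i => (δ i) ^ ((1:ℝ)/3)) hconj hf hg
  have hAnn : (0:ℝ) ≤ ∑ i ∈ S, p i / Real.sqrt (δ i) :=
    Finset.sum_nonneg fun i _ => div_nonneg (hp i).le (Real.sqrt_nonneg _)
  have key : ∑ i ∈ S, (p i) ^ ((2:ℝ)/3)
      ≤ (∑ i ∈ S, p i / Real.sqrt (δ i)) ^ ((2:ℝ)/3) * (∑ i ∈ S, δ i) ^ ((1:ℝ)/3) := by
    have e1 : ∀ i ∈ S, ((p i / Real.sqrt (δ i)) ^ ((2:ℝ)/3)) * ((δ i) ^ ((1:ℝ)/3))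
        = (p i) ^ ((2:ℝ)/3) := by
      intro i _
      have hδi := hδ i
      rw [Real.div_rpow (hp i).le (Real.sqrt_nonneg _), Real.sqrt_eq_rpow,
        ← Real.rpow_mul hδi.le, show (1:ℝ)/2 * (2/3) = 1/3 by norm_num,
        div_mul_cancel₀ _ (ne_of_gt (Real.rpow_pos_of_pos hδi _))]
    calc ∑ i ∈ S, (p i) ^ ((2:ℝ)/3)
        = ∑ i ∈ S, ((p i / Real.sqrt (δ i)) ^ ((2:ℝ)/3)) * ((δ i) ^ ((1:ℝ)/3)) :=
          (Finset.sum_congr rfl e1).symm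
      _ ≤ (∑ i ∈ S, ((p i / Real.sqrt (δ i)) ^ ((2:ℝ)/3)) ^ ((3:ℝ)/2)) ^ (1/((3:ℝ)/2))
            * (∑ i ∈ S, ((δ i) ^ ((1:ℝ)/3)) ^ (3:ℝ)) ^ (1/(3:ℝ)) := hold
      _ = (∑ i ∈ S, p i / Real.sqrt (δ i)) ^ ((2:ℝ)/3) * (∑ i ∈ S, δ i) ^ ((1:ℝ)/3) := by
          congr 1
          · rw [show (1/((3:ℝ)/2)) = (2:ℝ)/3 by norm_num]
            congr 1
            refine Finset.sum_congr rfl fun i _ => ?_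
            rw [← Real.rpow_mul (div_nonneg (hp i).le (Real.sqrt_nonneg _))]
            norm_num
          · rw [show (1/(3:ℝ)) = (1:ℝ)/3 by norm_num]
            congr 1
            refine Finset.sum_congr rfl fun i _ => ?_
            rw [← Real.rpow_mul (hδ i).le]
            norm_num
  -- raise to power 3/2
  have key2 : (P - (p j) ^ ((2:ℝ)/3)) ^ ((3:ℝ)/2)
      ≤ (∑ i ∈ S, p i / Real.sqrt (δ i)) * Real.sqrt (∑ i ∈ S, δ i) := by
    rw [← hQeq]
    have hQnn : (0:ℝ) ≤ ∑ i ∈ S, (p i) ^ ((2:ℝ)/3) :=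
      Finset.sum_nonneg fun i _ => Real.rpow_nonneg (hp i).le _
    calc (∑ i ∈ S, (p i) ^ ((2:ℝ)/3)) ^ ((3:ℝ)/2)
        ≤ ((∑ i ∈ S, p i / Real.sqrt (δ i)) ^ ((2:ℝ)/3) * (∑ i ∈ S, δ i) ^ ((1:ℝ)/3)) ^ ((3:ℝ)/2) :=
          Real.rpow_le_rpow hQnn key (by norm_num)
      _ = (∑ i ∈ S, p i / Real.sqrt (δ i)) * Real.sqrt (∑ i ∈ S, δ i) := by
          rw [Real.mul_rpow (Real.rpow_nonneg hAnn _) (Real.rpow_nonneg hBpos.le _),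
            ← Real.rpow_mul hAnn, ← Real.rpow_mul hBpos.le, Real.sqrt_eq_rpow]
          norm_num
  -- put things together
  have hsplit : ∑ i, p i / Real.sqrt (δ i)
      = p j / Real.sqrt (δ j) + ∑ i ∈ S, p i / Real.sqrt (δ i) := by
    rw [hS, Finset.sum_erase_eq_sub (Finset.mem_univ j)]
    ring
  rw [hsplit, add_div, ge_iff_le]
  have h1 : p j / Real.sqrt (δ j) / Real.sqrt (δ j) = p j / δ j := by
    rw [div_div, Real.mul_self_sqrt hδj.le]
  have h2 : (P - (p j) ^ ((2:ℝ)/3)) ^ ((3:ℝ)/2) / Real.sqrt ((n * dbar - δ j) * δ j)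
      ≤ (∑ i ∈ S, p i / Real.sqrt (δ i)) / Real.sqrt (δ j) := by
    rw [← hBeq, Real.sqrt_mul hBpos.le, ← div_div, div_le_div_iff_of_pos_right hsj,
      div_le_iff₀ (Real.sqrt_pos.mpr hBpos)]
    exact key2
  rw [h1]
  exact add_le_add le_rfl h2
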